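/- Let a ≥ 0 and μ ≥ 0. There exists a constant K > 0 such that for all α₁, α₂ ∈ (0, 1], the oscillatory integral I(α₁, α₂) = ∫_{ℝ⁴} ∫_{ℝ⁴} exp(i ω(p,q)) exp(−α₁(‖p‖² + a/‖p‖² + μ²)) exp(−α₂(‖q‖² + a/‖q‖² + μ²)) dp dq satisfies |I(α₁, α₂)| ≤ K. -/

import Mathlib

open MeasureTheory

/-- The Moyal oscillation phase `ω(p,q) = p∧q` on four-dimensional Moyal space
with `θ = 1`. -/
noncomputable def moyalPhase (p q : EuclideanSpace ℝ (Fin 4)) : ℝ :=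
  p 0 * q 1 - p 1 * q 0 + p 2 * q 3 - p 3 * q 2

open Real Complex Set
open scoped RealInnerProductSpace

local notation "E4" => EuclideanSpace ℝ (Fin 4)

noncomputable def J1 (p : E4) : E4 := (WithLp.equiv 2 (Fin 4 → ℝ)).symm ![-p 1, p 0, -p 3, p 2]
noncomputable def J2 (q : E4) : E4 := (WithLp.equiv 2 (Fin 4 → ℝ)).symm ![q 1, -q 0, q 3, -q 2]

lemma norm_J1 (p : E4) : ‖J1 p‖ = ‖p‖ := by
  simp [J1, EuclideanSpace.norm_eq, Fin.sum_univ_four]; ring_nf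

lemma norm_J2 (q : E4) : ‖J2 q‖ = ‖q‖ := by
  simp [J2, EuclideanSpace.norm_eq, Fin.sum_univ_four]; ring_nf

lemma inner_J1 (p q : E4) : ⟪J1 p, q⟫ = moyalPhase p q := by
  simp [J1, PiLp.inner_apply, Fin.sum_univ_four, moyalPhase]; ring

lemma inner_J2 (p q : E4) : ⟪J2 q, p⟫ = moyalPhase p q := by
  simp [J2, PiLp.inner_apply, Fin.sum_univ_four, moyalPhase]; ring

lemma continuous_moyal : Continuous (fun z : E4 × E4 => moyalPhase z.1 z.2) := by
  unfold moyalPhase; fun_prop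

/-! ### radial remainder -/

noncomputable def hrad (α a : ℝ) (y : ℝ) : ℝ :=
  rexp (-α * y ^ 2) - rexp (-α * y ^ 2) * rexp (-α * (a / y ^ 2))

noncomputable def hfun (α a : ℝ) (q : E4) : ℝ := hrad α a ‖q‖

lemma hrad_nonneg {α a : ℝ} (hα : 0 ≤ α) (ha : 0 ≤ a) (y : ℝ) : 0 ≤ hrad α a y := by
  unfold hrad
  have h0 : 0 ≤ a / y ^ 2 := div_nonneg ha (by positivity)
  have h1 : rexp (-α * (a / y ^ 2)) ≤ 1 := by
    rw [Real.exp_le_one_iff]; nlinarith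
  nlinarith [Real.exp_pos (-α * y ^ 2)]

lemma hrad_le_gauss {α a : ℝ} (hα : 0 ≤ α) (ha : 0 ≤ a) (y : ℝ) :
    hrad α a y ≤ rexp (-α * y ^ 2) := by
  unfold hrad
  have h0 : 0 ≤ a / y ^ 2 := div_nonneg ha (by positivity)
  nlinarith [Real.exp_pos (-α * y ^ 2), Real.exp_pos (-α * (a / y ^ 2))]

lemma hrad_le_one {α a : ℝ} (hα : 0 ≤ α) (ha : 0 ≤ a) (y : ℝ) : hrad α a y ≤ 1 :=
  (hrad_le_gauss hα ha y).trans (by rw [Real.exp_le_one_iff]; nlinarith [sq_nonneg y])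

lemma hrad_le_key {α a : ℝ} (hα : 0 ≤ α) (ha : 0 ≤ a) (y : ℝ) :
    hrad α a y ≤ rexp (-α * y ^ 2) * (α * (a / y ^ 2)) := by
  unfold hrad
  have h0 : 0 ≤ a / y ^ 2 := div_nonneg ha (by positivity)
  have h1 : 1 - rexp (-(α * (a / y ^ 2))) ≤ α * (a / y ^ 2) := by
    nlinarith [Real.add_one_le_exp (-(α * (a / y ^ 2)))]
  have h2 : rexp (-α * (a / y ^ 2)) = rexp (-(α * (a / y ^ 2))) := by ring_nf
  rw [h2]
  nlinarith [Real.exp_pos (-α * y ^ 2)]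

lemma hfun_measurable (α a : ℝ) : Measurable (hfun α a) := by
  unfold hfun hrad; fun_prop

lemma gauss_integrable {β : ℝ} (hβ : 0 < β) :
    Integrable (fun v : E4 => rexp (-β * ‖v‖ ^ 2)) := by
  have h := (GaussianFourier.integrable_cexp_neg_mul_sq_norm_add
    (V := E4) (b := (β : ℂ)) (by simpa using hβ) 0 0).norm
  refine h.congr (Filter.Eventually.of_forall fun v => ?_)
  simp only [Complex.norm_exp]
  norm_num; left; norm_cast

lemma gauss_value {β : ℝ} (hβ : 0 < β) :
    ∫ v : E4, rexp (-β * ‖v‖ ^ 2) = (π / β) ^ 2 := by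
  rw [GaussianFourier.integral_rexp_neg_mul_sq_norm hβ]
  rw [show ((Module.finrank ℝ E4 : ℝ) / 2 : ℝ) = (2 : ℕ) by simp; norm_num]
  rw [Real.rpow_natCast]

lemma hfun_integrable {α a : ℝ} (hα : 0 < α) (ha : 0 ≤ a) :
    Integrable (hfun α a) := by
  refine Integrable.mono' (gauss_integrable hα) (hfun_measurable α a).aestronglyMeasurable
    (Filter.Eventually.of_forall fun q => ?_)
  unfold hfun
  rw [Real.norm_eq_abs, _root_.abs_of_nonneg (hrad_nonneg hα.le ha ‖q‖)]
  exact hrad_le_gauss hα.le ha ‖q‖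

lemma radial_gauss_value {α : ℝ} (hα : 0 < α) :
    ∫ y in Ioi (0:ℝ), y * rexp (-α * y ^ 2) = (2 * α)⁻¹ := by
  have hderiv : ∀ y ∈ Ici (0:ℝ),
      HasDerivAt (fun y : ℝ => -(2 * α)⁻¹ * rexp (-α * y ^ 2)) (y * rexp (-α * y ^ 2)) y := by
    intro y _
    have h1 : HasDerivAt (fun y : ℝ => -α * y ^ 2) (-α * (2 * y)) y := by
      simpa using (hasDerivAt_pow 2 y).const_mul (-α)
    have h2 := (h1.exp).const_mul (-(2 * α)⁻¹)
    refine h2.congr_deriv ?_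
    have hk : (2 * α)⁻¹ * (2 * α) = 1 := inv_mul_cancel₀ (by positivity)
    linear_combination (y * rexp (-α * y ^ 2)) * hk
  have htend : Filter.Tendsto (fun y : ℝ => -(2 * α)⁻¹ * rexp (-α * y ^ 2))
      Filter.atTop (nhds 0) := by
    have h1 : Filter.Tendsto (fun y : ℝ => -α * y ^ 2) Filter.atTop Filter.atBot := by
      apply Filter.Tendsto.const_mul_atTop_of_neg (by linarith : -α < 0)
      exact Filter.tendsto_pow_atTop (by norm_num)
    have h2 := (Real.tendsto_exp_atBot.comp h1).const_mul (-(2 * α)⁻¹)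
    simpa using h2
  have := integral_Ioi_of_hasDerivAt_of_tendsto' hderiv
    (integrable_mul_exp_neg_mul_sq hα).integrableOn htend
  rw [this]; simp

lemma hfun_integral_le {α a : ℝ} (hα : 0 < α) (ha : 0 ≤ a) :
    ∫ q : E4, hfun α a q ≤ 2 * a * (volume (Metric.ball (0 : E4) 1)).toReal := by
  have hpolar := integral_fun_norm_addHaar (volume : Measure E4) (hrad α a)
  rw [show (Module.finrank ℝ E4) = 4 by simp] at hpolar
  unfold hfun
  rw [hpolar]
  set V := (volume (Metric.ball (0 : E4) 1)).toReal with hV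
  have hV0 : 0 ≤ V := ENNReal.toReal_nonneg
  have hrint : ∫ y in Ioi (0:ℝ), y ^ (4 - 1) • hrad α a y ≤ a / 2 := by
    have hmaj : Integrable (fun y : ℝ => (a / 2) * (2 * α * (y * rexp (-α * y ^ 2))))
        (volume.restrict (Ioi (0:ℝ))) :=
      ((((integrable_mul_exp_neg_mul_sq hα).const_mul (2 * α)).const_mul (a / 2))).restrict
    have hle : ∀ y ∈ Ioi (0:ℝ), y ^ (4-1) • hrad α a y
        ≤ (a / 2) * (2 * α * (y * rexp (-α * y ^ 2))) := by
      intro y hy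
      have hy0 : (0:ℝ) < y := hy
      have hk := hrad_le_key hα.le ha y
      have h2 : y ^ (4-1) • hrad α a y ≤ y ^ 3 * (rexp (-α * y ^ 2) * (α * (a / y ^ 2))) := by
        have := mul_le_mul_of_nonneg_left hk (le_of_lt (pow_pos hy0 3))
        simpa [smul_eq_mul] using this
      refine h2.trans (le_of_eq ?_)
      field_simp
    have hmono := integral_mono_of_nonneg (μ := volume.restrict (Ioi (0:ℝ)))
      ((ae_restrict_iff' measurableSet_Ioi).mpr (Filter.Eventually.of_forall
        (fun y hy => by
          have hy0 : (0:ℝ) < y := hy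
          have := hrad_nonneg hα.le ha y
          positivity)))
      hmaj
      ((ae_restrict_iff' measurableSet_Ioi).mpr (Filter.Eventually.of_forall hle))
    refine hmono.trans ?_
    rw [integral_const_mul, integral_const_mul, radial_gauss_value hα]
    rw [mul_inv_cancel₀ (by positivity)]
    linarith
  calc (4:ℕ) • V • ∫ y in Ioi (0:ℝ), y ^ (4 - 1) • hrad α a y
      = 4 * (V * ∫ y in Ioi (0:ℝ), y ^ (4 - 1) • hrad α a y) := by simp [smul_eq_mul]
    _ ≤ 4 * (V * (a / 2)) := by
        have := mul_le_mul_of_nonneg_left hrint hV0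
        nlinarith
    _ = 2 * a * V := by ring

/-! ### oscillatory Gaussian integral -/

lemma osc_gauss {α : ℝ} (hα : 0 < α) (w : E4) :
    ∫ v : E4, Complex.exp (Complex.I * (⟪w, v⟫ : ℂ)) * (rexp (-α * ‖v‖ ^ 2) : ℂ)
      = ((π / α : ℝ) : ℂ) ^ 2 * Complex.exp (((-‖w‖ ^ 2 / (4 * α) : ℝ)) : ℂ) := by
  have h := GaussianFourier.integral_cexp_neg_mul_sq_norm_add
    (V := E4) (b := (α : ℂ)) (by simpa using hα) Complex.I w
  have h2 : ∀ v : E4, Complex.exp (-(α:ℂ) * ‖v‖ ^ 2 + Complex.I * (⟪w, v⟫ : ℂ))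
      = Complex.exp (Complex.I * (⟪w, v⟫ : ℂ)) * (rexp (-α * ‖v‖ ^ 2) : ℂ) := by
    intro v
    rw [Complex.exp_add, mul_comm]
    congr 1
    rw [Complex.ofReal_exp]
    push_cast; ring_nf
  rw [show (fun v : E4 => Complex.exp (-(α:ℂ) * ‖v‖ ^ 2 + Complex.I * (⟪w, v⟫ : ℂ)))
      = fun v => Complex.exp (Complex.I * (⟪w, v⟫ : ℂ)) * (rexp (-α * ‖v‖ ^ 2) : ℂ)
      from funext h2] at h
  rw [h]
  have hfr : (Module.finrank ℝ E4 / 2 : ℂ) = ((2 : ℕ) : ℂ) := by simp; norm_num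
  rw [hfr, Complex.cpow_natCast]
  congr 1
  · push_cast; ring
  · congr 1
    rw [Complex.I_sq]
    push_cast; ring

lemma phase_norm (x : ℝ) : ‖Complex.exp (Complex.I * (x : ℂ))‖ = 1 := by
  rw [Complex.norm_exp]
  simp [Complex.mul_re]

lemma phase_mul_integrable {g : E4 → ℝ} (hg : Integrable g) (hgm : Measurable g) (w : E4) :
    Integrable (fun v : E4 => Complex.exp (Complex.I * (⟪w, v⟫ : ℂ)) * ((g v : ℝ) : ℂ)) := by
  have hip : Continuous fun v : E4 => (⟪w, v⟫ : ℝ) := continuous_const.inner continuous_id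
  have hphase : Continuous fun v : E4 => Complex.exp (Complex.I * (⟪w, v⟫ : ℂ)) :=
    Complex.continuous_exp.comp (continuous_const.mul (Complex.continuous_ofReal.comp hip))
  refine Integrable.mono' hg.abs
    (hphase.aestronglyMeasurable.mul
      ((Complex.measurable_ofReal.comp hgm).aestronglyMeasurable))
    (Filter.Eventually.of_forall fun v => ?_)
  rw [norm_mul, phase_norm]
  simp

/-! ### the splitting identity -/

lemma split {α : ℝ} (hα : 0 < α) {a : ℝ} (ha : 0 ≤ a) (μ : ℝ) (w : E4) :
    ∫ v : E4, Complex.exp (Complex.I * (⟪w, v⟫ : ℂ))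
        * (rexp (-α * (‖v‖ ^ 2 + a / ‖v‖ ^ 2 + μ ^ 2)) : ℂ)
      = (rexp (-α * μ ^ 2) : ℂ) *
          (((π / α : ℝ) : ℂ) ^ 2 * Complex.exp (((-‖w‖ ^ 2 / (4 * α) : ℝ)) : ℂ)
            - ∫ v : E4, Complex.exp (Complex.I * (⟪w, v⟫ : ℂ)) * ((hfun α a v : ℝ) : ℂ)) := by
  have hpt : ∀ v : E4, (rexp (-α * (‖v‖ ^ 2 + a / ‖v‖ ^ 2 + μ ^ 2)) : ℝ)
      = rexp (-α * μ ^ 2) * (rexp (-α * ‖v‖ ^ 2) - hfun α a v) := by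
    intro v
    unfold hfun hrad
    rw [show -α * (‖v‖ ^ 2 + a / ‖v‖ ^ 2 + μ ^ 2)
        = (-α * ‖v‖ ^ 2) + (-α * (a / ‖v‖ ^ 2)) + (-α * μ ^ 2) by ring,
      Real.exp_add, Real.exp_add]
    ring
  have hint_g : Integrable
      (fun v : E4 => Complex.exp (Complex.I * (⟪w, v⟫ : ℂ)) * (rexp (-α * ‖v‖ ^ 2) : ℂ)) :=
    phase_mul_integrable (gauss_integrable hα) (by fun_prop) w
  have hint_h : Integrable
      (fun v : E4 => Complex.exp (Complex.I * (⟪w, v⟫ : ℂ)) * ((hfun α a v : ℝ) : ℂ)) :=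
    phase_mul_integrable (hfun_integrable hα ha) (hfun_measurable α a) w
  calc ∫ v : E4, Complex.exp (Complex.I * (⟪w, v⟫ : ℂ))
        * (rexp (-α * (‖v‖ ^ 2 + a / ‖v‖ ^ 2 + μ ^ 2)) : ℂ)
      = ∫ v : E4, (rexp (-α * μ ^ 2) : ℂ) *
          (Complex.exp (Complex.I * (⟪w, v⟫ : ℂ)) * (rexp (-α * ‖v‖ ^ 2) : ℂ)
            - Complex.exp (Complex.I * (⟪w, v⟫ : ℂ)) * ((hfun α a v : ℝ) : ℂ)) := by
        refine integral_congr_ae (Filter.Eventually.of_forall fun v => ?_)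
        dsimp only
        rw [hpt v]; push_cast; ring
    _ = (rexp (-α * μ ^ 2) : ℂ) *
          ((∫ v : E4, Complex.exp (Complex.I * (⟪w, v⟫ : ℂ)) * (rexp (-α * ‖v‖ ^ 2) : ℂ))
            - ∫ v : E4, Complex.exp (Complex.I * (⟪w, v⟫ : ℂ)) * ((hfun α a v : ℝ) : ℂ)) := by
        rw [integral_const_mul, integral_sub hint_g hint_h]
    _ = _ := by rw [osc_gauss hα w]

/-! ### the sliced propagator -/

noncomputable def Ffun (α a μ : ℝ) (p : E4) : ℝ := rexp (-α * (‖p‖ ^ 2 + a / ‖p‖ ^ 2 + μ ^ 2))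

lemma Ffun_nonneg (α a μ : ℝ) (p : E4) : 0 ≤ Ffun α a μ p := (Real.exp_pos _).le

lemma Ffun_le_gauss {α a : ℝ} (hα : 0 ≤ α) (ha : 0 ≤ a) (μ : ℝ) (p : E4) :
    Ffun α a μ p ≤ rexp (-α * ‖p‖ ^ 2) := by
  unfold Ffun
  apply Real.exp_le_exp.mpr
  have h1 : 0 ≤ a / ‖p‖ ^ 2 := div_nonneg ha (by positivity)
  nlinarith [sq_nonneg μ]

lemma Ffun_le_one {α a : ℝ} (hα : 0 ≤ α) (ha : 0 ≤ a) (μ : ℝ) (p : E4) :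
    Ffun α a μ p ≤ 1 :=
  (Ffun_le_gauss hα ha μ p).trans
    (by rw [Real.exp_le_one_iff]; nlinarith [sq_nonneg ‖p‖])

lemma Ffun_measurable (α a μ : ℝ) : Measurable (Ffun α a μ) := by
  unfold Ffun; fun_prop

lemma Ffun_integrable {α a : ℝ} (hα : 0 < α) (ha : 0 ≤ a) (μ : ℝ) :
    Integrable (Ffun α a μ) := by
  refine Integrable.mono' (gauss_integrable hα) (Ffun_measurable α a μ).aestronglyMeasurable
    (Filter.Eventually.of_forall fun p => ?_)
  rw [Real.norm_eq_abs, _root_.abs_of_nonneg (Ffun_nonneg α a μ p)]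
  exact Ffun_le_gauss hα.le ha μ p

/-! ### two generic bounds -/

lemma norm_G_le {α : ℝ} (hα : 0 < α) {f : E4 → ℝ}
    (hfm : AEStronglyMeasurable f)
    (h0 : ∀ p, 0 ≤ f p) (h1 : ∀ p, f p ≤ 1) :
    ‖∫ p : E4, ((f p : ℝ) : ℂ) *
        (((π / α : ℝ) : ℂ) ^ 2 * Complex.exp (((-‖p‖ ^ 2 / (4 * α) : ℝ)) : ℂ))‖
      ≤ 16 * π ^ 4 := by
  have h4α : 0 < (4 * α)⁻¹ := by positivity
  have hbound : ∀ p : E4, ‖((f p : ℝ) : ℂ) *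
      (((π / α : ℝ) : ℂ) ^ 2 * Complex.exp (((-‖p‖ ^ 2 / (4 * α) : ℝ)) : ℂ))‖
      ≤ (π / α) ^ 2 * rexp (-(4 * α)⁻¹ * ‖p‖ ^ 2) := by
    intro p
    rw [norm_mul, norm_mul, norm_pow, Complex.norm_real, Complex.norm_real]
    rw [show ‖Complex.exp (((-‖p‖ ^ 2 / (4 * α) : ℝ)) : ℂ)‖ = rexp (-‖p‖ ^ 2 / (4 * α)) by
      rw [Complex.norm_exp, Complex.ofReal_re]]
    rw [Real.norm_eq_abs, _root_.abs_of_nonneg (h0 p), Real.norm_eq_abs,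
      _root_.abs_of_nonneg (by positivity : (0:ℝ) ≤ π / α)]
    rw [show -‖p‖ ^ 2 / (4 * α) = -(4 * α)⁻¹ * ‖p‖ ^ 2 by ring]
    calc f p * ((π / α) ^ 2 * rexp (-(4 * α)⁻¹ * ‖p‖ ^ 2))
        ≤ 1 * ((π / α) ^ 2 * rexp (-(4 * α)⁻¹ * ‖p‖ ^ 2)) := by
          apply mul_le_mul_of_nonneg_right (h1 p) (by positivity)
      _ = (π / α) ^ 2 * rexp (-(4 * α)⁻¹ * ‖p‖ ^ 2) := one_mul _
  refine (norm_integral_le_of_norm_le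
    ((gauss_integrable h4α).const_mul ((π / α) ^ 2))
    (Filter.Eventually.of_forall hbound)).trans ?_
  rw [integral_const_mul, gauss_value h4α]
  have e1 : π / (4 * α)⁻¹ = π * (4 * α) := by field_simp
  rw [e1]
  apply le_of_eq
  field_simp
  ring

lemma norm_H_le {α a : ℝ} (hα : 0 < α) (ha : 0 ≤ a) (phase : E4 → ℝ) :
    ‖∫ v : E4, Complex.exp (Complex.I * ((phase v : ℝ) : ℂ)) * ((hfun α a v : ℝ) : ℂ)‖
      ≤ 2 * a * (volume (Metric.ball (0 : E4) 1)).toReal := by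
  refine (norm_integral_le_of_norm_le (hfun_integrable hα ha)
    (Filter.Eventually.of_forall fun v => ?_)).trans (hfun_integral_le hα ha)
  rw [norm_mul, phase_norm, one_mul, Complex.norm_real, Real.norm_eq_abs]
  rw [_root_.abs_of_nonneg (show (0:ℝ) ≤ hfun α a v from hrad_nonneg hα.le ha ‖v‖)]

/-! ### continuity / integrability helpers for the Gaussian factor -/

lemma G_cont {α : ℝ} : Continuous (fun p : E4 =>
    ((π / α : ℝ) : ℂ) ^ 2 * Complex.exp (((-‖p‖ ^ 2 / (4 * α) : ℝ)) : ℂ)) := by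
  apply continuous_const.mul
  exact Complex.continuous_exp.comp (Complex.continuous_ofReal.comp (by fun_prop))

lemma G_norm {α : ℝ} (hα : 0 < α) (p : E4) :
    ‖((π / α : ℝ) : ℂ) ^ 2 * Complex.exp (((-‖p‖ ^ 2 / (4 * α) : ℝ)) : ℂ)‖
      = (π / α) ^ 2 * rexp (-(4 * α)⁻¹ * ‖p‖ ^ 2) := by
  rw [norm_mul, norm_pow, Complex.norm_real, Real.norm_eq_abs,
    _root_.abs_of_nonneg (by positivity : (0:ℝ) ≤ π / α)]
  rw [show ‖Complex.exp (((-‖p‖ ^ 2 / (4 * α) : ℝ)) : ℂ)‖ = rexp (-‖p‖ ^ 2 / (4 * α)) by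
    rw [Complex.norm_exp, Complex.ofReal_re]]
  rw [show -‖p‖ ^ 2 / (4 * α) = -(4 * α)⁻¹ * ‖p‖ ^ 2 by ring]

lemma FG_integrable {α : ℝ} (hα : 0 < α) {f : E4 → ℝ} (hm : Measurable f)
    (h0 : ∀ p, 0 ≤ f p) (h1 : ∀ p, f p ≤ 1) :
    Integrable (fun p : E4 => ((f p : ℝ) : ℂ) *
      (((π / α : ℝ) : ℂ) ^ 2 * Complex.exp (((-‖p‖ ^ 2 / (4 * α) : ℝ)) : ℂ))) := by
  have h4α : 0 < (4 * α)⁻¹ := by positivity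
  refine Integrable.mono' ((gauss_integrable h4α).const_mul ((π / α) ^ 2))
    (((Complex.measurable_ofReal.comp hm).aestronglyMeasurable).mul
      G_cont.aestronglyMeasurable)
    (Filter.Eventually.of_forall fun p => ?_)
  rw [norm_mul, G_norm hα, Complex.norm_real, Real.norm_eq_abs, _root_.abs_of_nonneg (h0 p)]
  calc f p * ((π / α) ^ 2 * rexp (-(4 * α)⁻¹ * ‖p‖ ^ 2))
      ≤ 1 * ((π / α) ^ 2 * rexp (-(4 * α)⁻¹ * ‖p‖ ^ 2)) :=
        mul_le_mul_of_nonneg_right (h1 p) (by positivity)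
    _ = (π / α) ^ 2 * rexp (-(4 * α)⁻¹ * ‖p‖ ^ 2) := one_mul _

/-- Non-planar power counting gain of the `1/p²` model: the oscillatory double
integral coupling two internal loop momenta through the Moyal phase,
`I(α₁,α₂) = ∫∫ e^{iω(p,q)} e^{-α₁(‖p‖²+a/‖p‖²+μ²)} e^{-α₂(‖q‖²+a/‖q‖²+μ²)} dp dq`,
is bounded uniformly in the slice parameters `α₁, α₂ ∈ (0,1]`. -/
theorem nonplanar_oscillatory_integral_uniformly_bounded (a μ : ℝ) (ha : 0 ≤ a) (hμ : 0 ≤ μ) :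
    ∃ K > (0 : ℝ), ∀ α₁ α₂ : ℝ, α₁ ∈ Set.Ioc (0 : ℝ) 1 → α₂ ∈ Set.Ioc (0 : ℝ) 1 →
      ‖∫ p : EuclideanSpace ℝ (Fin 4), ∫ q : EuclideanSpace ℝ (Fin 4),
          Complex.exp (Complex.I * (moyalPhase p q : ℂ)) *
            Real.exp (-α₁ * (‖p‖ ^ 2 + a / ‖p‖ ^ 2 + μ ^ 2)) *
            Real.exp (-α₂ * (‖q‖ ^ 2 + a / ‖q‖ ^ 2 + μ ^ 2))‖ ≤ K := by

  set V := (volume (Metric.ball (0 : E4) 1)).toReal with hVdef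
  have hV0 : 0 ≤ V := ENNReal.toReal_nonneg
  refine ⟨32 * π ^ 4 + (2 * a * V) ^ 2 + 1, by positivity, ?_⟩
  rintro α₁ α₂ ⟨hα₁, hα₁1⟩ ⟨hα₂, hα₂1⟩
  -- abbreviations
  set G₂ : E4 → ℂ := fun p =>
    ((π / α₂ : ℝ) : ℂ) ^ 2 * Complex.exp (((-‖p‖ ^ 2 / (4 * α₂) : ℝ)) : ℂ) with hG₂def
  set G₁ : E4 → ℂ := fun q =>
    ((π / α₁ : ℝ) : ℂ) ^ 2 * Complex.exp (((-‖q‖ ^ 2 / (4 * α₁) : ℝ)) : ℂ) with hG₁def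
  set H₂ : E4 → ℂ := fun p => ∫ q : E4,
    Complex.exp (Complex.I * (moyalPhase p q : ℂ)) * ((hfun α₂ a q : ℝ) : ℂ) with hH₂def
  set H₁ : E4 → ℂ := fun q => ∫ p : E4,
    Complex.exp (Complex.I * (moyalPhase p q : ℂ)) * ((hfun α₁ a p : ℝ) : ℂ) with hH₁def
  have hc₁le : rexp (-α₁ * μ ^ 2) ≤ 1 := by
    rw [Real.exp_le_one_iff]; nlinarith [sq_nonneg μ]
  have hc₂le : rexp (-α₂ * μ ^ 2) ≤ 1 := by
    rw [Real.exp_le_one_iff]; nlinarith [sq_nonneg μ]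
  have hF₁meas : Measurable fun p : E4 => rexp (-α₁ * (‖p‖ ^ 2 + a / ‖p‖ ^ 2 + μ ^ 2)) :=
    Ffun_measurable α₁ a μ
  have hF₁int : Integrable fun p : E4 => rexp (-α₁ * (‖p‖ ^ 2 + a / ‖p‖ ^ 2 + μ ^ 2)) :=
    Ffun_integrable hα₁ ha μ
  have hΦcont : Continuous fun z : E4 × E4 =>
      Complex.exp (Complex.I * (moyalPhase z.1 z.2 : ℂ)) :=
    Complex.continuous_exp.comp
      (continuous_const.mul (Complex.continuous_ofReal.comp continuous_moyal))
  -- inner splitting in q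
  have hsplit₂ : ∀ p : E4,
      (∫ q : E4, Complex.exp (Complex.I * (moyalPhase p q : ℂ)) *
        (rexp (-α₂ * (‖q‖ ^ 2 + a / ‖q‖ ^ 2 + μ ^ 2)) : ℂ))
      = (rexp (-α₂ * μ ^ 2) : ℂ) * (G₂ p - H₂ p) := by
    intro p
    have e1 : (∫ q : E4, Complex.exp (Complex.I * (moyalPhase p q : ℂ)) *
          (rexp (-α₂ * (‖q‖ ^ 2 + a / ‖q‖ ^ 2 + μ ^ 2)) : ℂ))
        = ∫ q : E4, Complex.exp (Complex.I * ((⟪J1 p, q⟫ : ℝ) : ℂ)) *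
          (rexp (-α₂ * (‖q‖ ^ 2 + a / ‖q‖ ^ 2 + μ ^ 2)) : ℂ) :=
      integral_congr_ae (Filter.Eventually.of_forall fun q => by dsimp only; rw [inner_J1])
    have e2 : (∫ q : E4, Complex.exp (Complex.I * ((⟪J1 p, q⟫ : ℝ) : ℂ)) *
          ((hfun α₂ a q : ℝ) : ℂ)) = H₂ p :=
      integral_congr_ae (Filter.Eventually.of_forall fun q => by dsimp only; rw [inner_J1])
    rw [e1, split hα₂ ha μ (J1 p), norm_J1, e2, hG₂def]
  -- splitting in p (for the remainder term)
  have hsplit₁ : ∀ q : E4,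
      (∫ p : E4, Complex.exp (Complex.I * (moyalPhase p q : ℂ)) *
        (rexp (-α₁ * (‖p‖ ^ 2 + a / ‖p‖ ^ 2 + μ ^ 2)) : ℂ))
      = (rexp (-α₁ * μ ^ 2) : ℂ) * (G₁ q - H₁ q) := by
    intro q
    have e1 : (∫ p : E4, Complex.exp (Complex.I * (moyalPhase p q : ℂ)) *
          (rexp (-α₁ * (‖p‖ ^ 2 + a / ‖p‖ ^ 2 + μ ^ 2)) : ℂ))
        = ∫ p : E4, Complex.exp (Complex.I * ((⟪J2 q, p⟫ : ℝ) : ℂ)) *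
          (rexp (-α₁ * (‖p‖ ^ 2 + a / ‖p‖ ^ 2 + μ ^ 2)) : ℂ) :=
      integral_congr_ae (Filter.Eventually.of_forall fun p => by dsimp only; rw [inner_J2])
    have e2 : (∫ p : E4, Complex.exp (Complex.I * ((⟪J2 q, p⟫ : ℝ) : ℂ)) *
          ((hfun α₁ a p : ℝ) : ℂ)) = H₁ q :=
      integral_congr_ae (Filter.Eventually.of_forall fun p => by dsimp only; rw [inner_J2])
    rw [e1, split hα₁ ha μ (J2 q), norm_J2, e2, hG₁def]
  -- measurability of H₂ and H₁
  have hH₂sm : StronglyMeasurable H₂ := by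
    have hsm : StronglyMeasurable fun z : E4 × E4 =>
        Complex.exp (Complex.I * (moyalPhase z.1 z.2 : ℂ)) * ((hfun α₂ a z.2 : ℝ) : ℂ) :=
      hΦcont.stronglyMeasurable.mul
        (Complex.measurable_ofReal.comp ((hfun_measurable α₂ a).comp measurable_snd)).stronglyMeasurable
    exact hsm.integral_prod_right'
  have hH₁sm : StronglyMeasurable H₁ := by
    have hsm : StronglyMeasurable fun z : E4 × E4 =>
        Complex.exp (Complex.I * (moyalPhase z.2 z.1 : ℂ)) * ((hfun α₁ a z.2 : ℝ) : ℂ) :=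
      (hΦcont.comp continuous_swap).stronglyMeasurable.mul
        (Complex.measurable_ofReal.comp ((hfun_measurable α₁ a).comp measurable_snd)).stronglyMeasurable
    exact hsm.integral_prod_right'
  -- norm bounds on H₂, H₁
  have hH₂bd : ∀ p : E4, ‖H₂ p‖ ≤ 2 * a * V := fun p =>
    norm_H_le hα₂ ha (fun q => moyalPhase p q)
  have hH₁bd : ∀ q : E4, ‖H₁ q‖ ≤ 2 * a * V := fun q =>
    norm_H_le hα₁ ha (fun p => moyalPhase p q)
  -- integrability of the two outer pieces
  have hintFG : Integrable fun p : E4 =>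
      ((rexp (-α₁ * (‖p‖ ^ 2 + a / ‖p‖ ^ 2 + μ ^ 2)) : ℝ) : ℂ) * G₂ p :=
    FG_integrable hα₂ hF₁meas (fun p => Ffun_nonneg α₁ a μ p)
      (fun p => Ffun_le_one hα₁.le ha μ p)
  have hintFH : Integrable fun p : E4 =>
      ((rexp (-α₁ * (‖p‖ ^ 2 + a / ‖p‖ ^ 2 + μ ^ 2)) : ℝ) : ℂ) * H₂ p := by
    refine Integrable.mono' ((gauss_integrable hα₁).const_mul (2 * a * V))
      (((Complex.measurable_ofReal.comp hF₁meas).aestronglyMeasurable).mul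
        hH₂sm.aestronglyMeasurable)
      (Filter.Eventually.of_forall fun p => ?_)
    rw [norm_mul, Complex.norm_real, Real.norm_eq_abs, Real.abs_exp]
    calc rexp (-α₁ * (‖p‖ ^ 2 + a / ‖p‖ ^ 2 + μ ^ 2)) * ‖H₂ p‖
        ≤ rexp (-α₁ * ‖p‖ ^ 2) * (2 * a * V) :=
          mul_le_mul (Ffun_le_gauss hα₁.le ha μ p) (hH₂bd p) (norm_nonneg _) (Real.exp_pos _).le
      _ = 2 * a * V * rexp (-α₁ * ‖p‖ ^ 2) := by ring
  -- step 1 : reduce the double integral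
  have e1 : (∫ p : E4, ∫ q : E4,
        Complex.exp (Complex.I * (moyalPhase p q : ℂ)) *
          (rexp (-α₁ * (‖p‖ ^ 2 + a / ‖p‖ ^ 2 + μ ^ 2)) : ℂ) *
          (rexp (-α₂ * (‖q‖ ^ 2 + a / ‖q‖ ^ 2 + μ ^ 2)) : ℂ))
      = ∫ p : E4, ((rexp (-α₁ * (‖p‖ ^ 2 + a / ‖p‖ ^ 2 + μ ^ 2)) : ℝ) : ℂ) *
          ((rexp (-α₂ * μ ^ 2) : ℝ) : ℂ) * (G₂ p - H₂ p) := by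
    refine integral_congr_ae (Filter.Eventually.of_forall fun p => ?_)
    dsimp only
    rw [show (∫ q : E4, Complex.exp (Complex.I * (moyalPhase p q : ℂ)) *
          (rexp (-α₁ * (‖p‖ ^ 2 + a / ‖p‖ ^ 2 + μ ^ 2)) : ℂ) *
          (rexp (-α₂ * (‖q‖ ^ 2 + a / ‖q‖ ^ 2 + μ ^ 2)) : ℂ))
        = ∫ q : E4, ((rexp (-α₁ * (‖p‖ ^ 2 + a / ‖p‖ ^ 2 + μ ^ 2)) : ℝ) : ℂ) *
          (Complex.exp (Complex.I * (moyalPhase p q : ℂ)) *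
            (rexp (-α₂ * (‖q‖ ^ 2 + a / ‖q‖ ^ 2 + μ ^ 2)) : ℂ)) from
        integral_congr_ae (Filter.Eventually.of_forall fun q => by dsimp only; ring)]
    rw [integral_const_mul, hsplit₂ p, mul_assoc]
  -- step 2 : separate the two terms
  have e2 : (∫ p : E4, ((rexp (-α₁ * (‖p‖ ^ 2 + a / ‖p‖ ^ 2 + μ ^ 2)) : ℝ) : ℂ) *
        ((rexp (-α₂ * μ ^ 2) : ℝ) : ℂ) * (G₂ p - H₂ p))
      = ((rexp (-α₂ * μ ^ 2) : ℝ) : ℂ) *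
        ((∫ p : E4, ((rexp (-α₁ * (‖p‖ ^ 2 + a / ‖p‖ ^ 2 + μ ^ 2)) : ℝ) : ℂ) * G₂ p)
          - ∫ p : E4, ((rexp (-α₁ * (‖p‖ ^ 2 + a / ‖p‖ ^ 2 + μ ^ 2)) : ℝ) : ℂ) * H₂ p) := by
    rw [← integral_sub hintFG hintFH, ← integral_const_mul]
    refine integral_congr_ae (Filter.Eventually.of_forall fun p => ?_)
    dsimp only
    ring
  -- step 3 : Fubini for the remainder term
  have hFzint : Integrable (Function.uncurry fun p q : E4 =>
      ((rexp (-α₁ * (‖p‖ ^ 2 + a / ‖p‖ ^ 2 + μ ^ 2)) : ℝ) : ℂ) *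
        (Complex.exp (Complex.I * (moyalPhase p q : ℂ)) * ((hfun α₂ a q : ℝ) : ℂ)))
      (volume.prod volume) := by
    refine Integrable.mono' (hF₁int.mul_prod (hfun_integrable hα₂ ha)) ?_
      (Filter.Eventually.of_forall fun z => ?_)
    · exact ((Complex.measurable_ofReal.comp (hF₁meas.comp measurable_fst)).mul
        (hΦcont.measurable.mul
          (Complex.measurable_ofReal.comp ((hfun_measurable α₂ a).comp measurable_snd)))).aestronglyMeasurable
    · simp only [Function.uncurry]
      rw [norm_mul, norm_mul, phase_norm, one_mul, Complex.norm_real, Complex.norm_real,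
        Real.norm_eq_abs, Real.abs_exp, Real.norm_eq_abs]
      rw [_root_.abs_of_nonneg (show (0:ℝ) ≤ hfun α₂ a z.2 from hrad_nonneg hα₂.le ha ‖z.2‖)]
  have hint_hG : Integrable fun q : E4 => ((hfun α₂ a q : ℝ) : ℂ) * G₁ q :=
    FG_integrable hα₁ (hfun_measurable α₂ a)
      (fun q => hrad_nonneg hα₂.le ha ‖q‖) (fun q => hrad_le_one hα₂.le ha ‖q‖)
  have hint_hH : Integrable fun q : E4 => ((hfun α₂ a q : ℝ) : ℂ) * H₁ q := by
    refine Integrable.mono' ((hfun_integrable hα₂ ha).const_mul (2 * a * V))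
      (((Complex.measurable_ofReal.comp (hfun_measurable α₂ a)).aestronglyMeasurable).mul
        hH₁sm.aestronglyMeasurable)
      (Filter.Eventually.of_forall fun q => ?_)
    rw [norm_mul, Complex.norm_real, Real.norm_eq_abs,
      _root_.abs_of_nonneg (show (0:ℝ) ≤ hfun α₂ a q from hrad_nonneg hα₂.le ha ‖q‖)]
    calc hfun α₂ a q * ‖H₁ q‖ ≤ hfun α₂ a q * (2 * a * V) :=
          mul_le_mul_of_nonneg_left (hH₁bd q) (hrad_nonneg hα₂.le ha ‖q‖)
      _ = 2 * a * V * hfun α₂ a q := by ring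
  have e3 : (∫ p : E4, ((rexp (-α₁ * (‖p‖ ^ 2 + a / ‖p‖ ^ 2 + μ ^ 2)) : ℝ) : ℂ) * H₂ p)
      = ((rexp (-α₁ * μ ^ 2) : ℝ) : ℂ) *
        ((∫ q : E4, ((hfun α₂ a q : ℝ) : ℂ) * G₁ q)
          - ∫ q : E4, ((hfun α₂ a q : ℝ) : ℂ) * H₁ q) := by
    have s1 : (∫ p : E4, ((rexp (-α₁ * (‖p‖ ^ 2 + a / ‖p‖ ^ 2 + μ ^ 2)) : ℝ) : ℂ) * H₂ p)
        = ∫ p : E4, ∫ q : E4,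
            ((rexp (-α₁ * (‖p‖ ^ 2 + a / ‖p‖ ^ 2 + μ ^ 2)) : ℝ) : ℂ) *
              (Complex.exp (Complex.I * (moyalPhase p q : ℂ)) * ((hfun α₂ a q : ℝ) : ℂ)) := by
      refine integral_congr_ae (Filter.Eventually.of_forall fun p => ?_)
      rw [hH₂def]
      dsimp only
      rw [← integral_const_mul]
    have s2 := integral_integral_swap hFzint
    have s3 : (∫ q : E4, ∫ p : E4,
          ((rexp (-α₁ * (‖p‖ ^ 2 + a / ‖p‖ ^ 2 + μ ^ 2)) : ℝ) : ℂ) *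
            (Complex.exp (Complex.I * (moyalPhase p q : ℂ)) * ((hfun α₂ a q : ℝ) : ℂ)))
        = ∫ q : E4, ((hfun α₂ a q : ℝ) : ℂ) *
            (((rexp (-α₁ * μ ^ 2) : ℝ) : ℂ) * (G₁ q - H₁ q)) := by
      refine integral_congr_ae (Filter.Eventually.of_forall fun q => ?_)
      dsimp only
      rw [show (∫ p : E4, ((rexp (-α₁ * (‖p‖ ^ 2 + a / ‖p‖ ^ 2 + μ ^ 2)) : ℝ) : ℂ) *
            (Complex.exp (Complex.I * (moyalPhase p q : ℂ)) * ((hfun α₂ a q : ℝ) : ℂ)))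
          = ∫ p : E4, ((hfun α₂ a q : ℝ) : ℂ) *
              (Complex.exp (Complex.I * (moyalPhase p q : ℂ)) *
                ((rexp (-α₁ * (‖p‖ ^ 2 + a / ‖p‖ ^ 2 + μ ^ 2)) : ℝ) : ℂ)) from
          integral_congr_ae (Filter.Eventually.of_forall fun p => by dsimp only; ring)]
      rw [integral_const_mul, hsplit₁ q]
    have s4 : (∫ q : E4, ((hfun α₂ a q : ℝ) : ℂ) *
          (((rexp (-α₁ * μ ^ 2) : ℝ) : ℂ) * (G₁ q - H₁ q)))
        = ((rexp (-α₁ * μ ^ 2) : ℝ) : ℂ) *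
          ((∫ q : E4, ((hfun α₂ a q : ℝ) : ℂ) * G₁ q)
            - ∫ q : E4, ((hfun α₂ a q : ℝ) : ℂ) * H₁ q) := by
      rw [← integral_sub hint_hG hint_hH, ← integral_const_mul]
      refine integral_congr_ae (Filter.Eventually.of_forall fun q => ?_)
      dsimp only
      ring
    rw [s1, s2, s3, s4]
  -- the three norm bounds
  have hTG : ‖∫ p : E4, ((rexp (-α₁ * (‖p‖ ^ 2 + a / ‖p‖ ^ 2 + μ ^ 2)) : ℝ) : ℂ) * G₂ p‖
      ≤ 16 * π ^ 4 :=
    norm_G_le hα₂ hF₁meas.aestronglyMeasurable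
      (fun p => Ffun_nonneg α₁ a μ p) (fun p => Ffun_le_one hα₁.le ha μ p)
  have hSG : ‖∫ q : E4, ((hfun α₂ a q : ℝ) : ℂ) * G₁ q‖ ≤ 16 * π ^ 4 :=
    norm_G_le hα₁ (hfun_measurable α₂ a).aestronglyMeasurable
      (fun q => hrad_nonneg hα₂.le ha ‖q‖) (fun q => hrad_le_one hα₂.le ha ‖q‖)
  have hSH : ‖∫ q : E4, ((hfun α₂ a q : ℝ) : ℂ) * H₁ q‖ ≤ (2 * a * V) * (2 * a * V) := by
    refine (norm_integral_le_of_norm_le ((hfun_integrable hα₂ ha).const_mul (2 * a * V))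
      (Filter.Eventually.of_forall fun q => ?_)).trans ?_
    · rw [norm_mul, Complex.norm_real, Real.norm_eq_abs,
        _root_.abs_of_nonneg (show (0:ℝ) ≤ hfun α₂ a q from hrad_nonneg hα₂.le ha ‖q‖)]
      calc hfun α₂ a q * ‖H₁ q‖ ≤ hfun α₂ a q * (2 * a * V) :=
            mul_le_mul_of_nonneg_left (hH₁bd q) (hrad_nonneg hα₂.le ha ‖q‖)
        _ = 2 * a * V * hfun α₂ a q := by ring
    · rw [integral_const_mul]
      exact mul_le_mul_of_nonneg_left (hfun_integral_le hα₂ ha) (by positivity)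
  have hTH : ‖∫ p : E4, ((rexp (-α₁ * (‖p‖ ^ 2 + a / ‖p‖ ^ 2 + μ ^ 2)) : ℝ) : ℂ) * H₂ p‖
      ≤ 16 * π ^ 4 + (2 * a * V) ^ 2 := by
    rw [e3, norm_mul, Complex.norm_real, Real.norm_eq_abs, Real.abs_exp]
    calc rexp (-α₁ * μ ^ 2) * ‖(∫ q : E4, ((hfun α₂ a q : ℝ) : ℂ) * G₁ q)
            - ∫ q : E4, ((hfun α₂ a q : ℝ) : ℂ) * H₁ q‖
        ≤ 1 * (‖∫ q : E4, ((hfun α₂ a q : ℝ) : ℂ) * G₁ q‖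
            + ‖∫ q : E4, ((hfun α₂ a q : ℝ) : ℂ) * H₁ q‖) :=
          mul_le_mul hc₁le (norm_sub_le _ _) (norm_nonneg _) zero_le_one
      _ ≤ 1 * (16 * π ^ 4 + (2 * a * V) * (2 * a * V)) := by
          have := add_le_add hSG hSH
          nlinarith
      _ = 16 * π ^ 4 + (2 * a * V) ^ 2 := by ring
  -- conclusion
  rw [e1, e2, norm_mul, Complex.norm_real, Real.norm_eq_abs, Real.abs_exp]
  calc rexp (-α₂ * μ ^ 2) *
        ‖(∫ p : E4, ((rexp (-α₁ * (‖p‖ ^ 2 + a / ‖p‖ ^ 2 + μ ^ 2)) : ℝ) : ℂ) * G₂ p)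
          - ∫ p : E4, ((rexp (-α₁ * (‖p‖ ^ 2 + a / ‖p‖ ^ 2 + μ ^ 2)) : ℝ) : ℂ) * H₂ p‖
      ≤ 1 * (‖∫ p : E4, ((rexp (-α₁ * (‖p‖ ^ 2 + a / ‖p‖ ^ 2 + μ ^ 2)) : ℝ) : ℂ) * G₂ p‖
          + ‖∫ p : E4, ((rexp (-α₁ * (‖p‖ ^ 2 + a / ‖p‖ ^ 2 + μ ^ 2)) : ℝ) : ℂ) * H₂ p‖) :=
        mul_le_mul hc₂le (norm_sub_le _ _) (norm_nonneg _) zero_le_one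
    _ ≤ 1 * (16 * π ^ 4 + (16 * π ^ 4 + (2 * a * V) ^ 2)) := by
        have := add_le_add hTG hTH
        nlinarith
    _ ≤ 32 * π ^ 4 + (2 * a * V) ^ 2 + 1 := by nlinarith
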